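/- Let v : Fin (2n) → ℝ be values in (0,1] where the first n values each dominate the last n values. Write S⁺ = ∑_{i<n} vᵢ, S⁻ = ∑_{i≥n} vᵢ, P⁺ = ∏_{i<n} vᵢ, P⁻ = ∏_{i≥n} vᵢ. Then S⁺ ≥ S⁻, P⁺ ≥ P⁻, and S⁺/S⁻ ≤ P⁺/P⁻. -/

import Mathlib

open Finset

lemma split_family_key {n : ℕ} (hn : 1 ≤ n) (a b : Fin n → ℝ)
    (hb : ∀ i, 0 < b i) (hab : ∀ i, b i ≤ a i) :
    (∑ i, b i) ≤ (∑ i, a i) ∧ (∏ i, b i) ≤ (∏ i, a i) ∧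
    (∑ i, a i) / (∑ i, b i) ≤ (∏ i, a i) / (∏ i, b i) := by
  have hsum : ∑ i, b i ≤ ∑ i, a i := Finset.sum_le_sum fun i _ => hab i
  have hprod : ∏ i, b i ≤ ∏ i, a i :=
    Finset.prod_le_prod (fun i _ => (hb i).le) (fun i _ => hab i)
  have hbpos : (0:ℝ) < ∏ i, b i := Finset.prod_pos fun i _ => hb i
  have hspos : (0:ℝ) < ∑ i, b i :=
    Finset.sum_pos (fun i _ => hb i) ⟨⟨0, hn⟩, Finset.mem_univ _⟩
  refine ⟨hsum, hprod, ?_⟩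
  rw [div_le_div_iff₀ hspos hbpos]
  calc (∑ i, a i) * ∏ i, b i = ∑ i, a i * ∏ j, b j := by rw [Finset.sum_mul]
    _ ≤ ∑ i, b i * ∏ j, a j := by
        refine Finset.sum_le_sum fun i _ => ?_
        have e1 : ∏ j, b j = b i * ∏ j ∈ Finset.univ.erase i, b j :=
          (Finset.mul_prod_erase _ _ (Finset.mem_univ i)).symm
        have e2 : ∏ j, a j = a i * ∏ j ∈ Finset.univ.erase i, a j :=
          (Finset.mul_prod_erase _ _ (Finset.mem_univ i)).symm
        have hP : ∏ j ∈ Finset.univ.erase i, b j ≤ ∏ j ∈ Finset.univ.erase i, a j :=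
          Finset.prod_le_prod (fun j _ => (hb j).le) (fun j _ => hab j)
        have hab' : (0:ℝ) ≤ a i * b i :=
          mul_nonneg ((hb i).le.trans (hab i)) (hb i).le
        rw [e1, e2, show a i * (b i * ∏ j ∈ Finset.univ.erase i, b j)
              = (a i * b i) * ∏ j ∈ Finset.univ.erase i, b j by ring,
            show b i * (a i * ∏ j ∈ Finset.univ.erase i, a j)
              = (a i * b i) * ∏ j ∈ Finset.univ.erase i, a j by ring]
        exact mul_le_mul_of_nonneg_left hP hab'
    _ = (∏ i, a i) * ∑ i, b i := by rw [← Finset.sum_mul]; ring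

theorem split_family_sum_prod_ratios
    (n : ℕ) (hn : 1 ≤ n) (v : Fin (2 * n) → ℝ)
    (hv : ∀ i, v i ∈ Set.Ioc (0:ℝ) 1)
    (hdom : ∀ i j : Fin (2 * n), (i : ℕ) < n → n ≤ (j : ℕ) → v i ≥ v j) :
    (∑ i ∈ Finset.univ.filter (fun i : Fin (2 * n) => (i : ℕ) < n), v i)
      ≥ (∑ i ∈ Finset.univ.filter (fun i : Fin (2 * n) => n ≤ (i : ℕ)), v i) ∧
    (∏ i ∈ Finset.univ.filter (fun i : Fin (2 * n) => (i : ℕ) < n), v i)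
      ≥ (∏ i ∈ Finset.univ.filter (fun i : Fin (2 * n) => n ≤ (i : ℕ)), v i) ∧
    (∑ i ∈ Finset.univ.filter (fun i : Fin (2 * n) => (i : ℕ) < n), v i)
        / (∑ i ∈ Finset.univ.filter (fun i : Fin (2 * n) => n ≤ (i : ℕ)), v i)
      ≤ (∏ i ∈ Finset.univ.filter (fun i : Fin (2 * n) => (i : ℕ) < n), v i)
        / (∏ i ∈ Finset.univ.filter (fun i : Fin (2 * n) => n ≤ (i : ℕ)), v i) := by
  have h2n : ∀ i : Fin n, (i : ℕ) < 2 * n := fun i => by omega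
  have h2n' : ∀ i : Fin n, (i : ℕ) + n < 2 * n := fun i => by omega
  let e1 : Fin n ↪ Fin (2 * n) :=
    ⟨fun i => ⟨i, h2n i⟩, fun i j h => by
      apply Fin.ext; simpa [Fin.ext_iff] using h⟩
  let e2 : Fin n ↪ Fin (2 * n) :=
    ⟨fun i => ⟨i + n, h2n' i⟩, fun i j h => by
      apply Fin.ext; simp [Fin.ext_iff] at h; omega⟩
  have hm1 : Finset.univ.filter (fun i : Fin (2 * n) => (i : ℕ) < n)
      = Finset.univ.map e1 := by
    ext x
    simp only [Finset.mem_filter, Finset.mem_univ, true_and, Finset.mem_map]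
    constructor
    · intro hx
      exact ⟨⟨x, hx⟩, Fin.ext rfl⟩
    · rintro ⟨i, rfl⟩
      exact i.isLt
  have hm2 : Finset.univ.filter (fun i : Fin (2 * n) => n ≤ (i : ℕ))
      = Finset.univ.map e2 := by
    ext x
    simp only [Finset.mem_filter, Finset.mem_univ, true_and, Finset.mem_map]
    constructor
    · intro hx
      refine ⟨⟨(x : ℕ) - n, by omega⟩, Fin.ext ?_⟩
      show (x : ℕ) - n + n = x; omega
    · rintro ⟨i, rfl⟩
      show n ≤ (i : ℕ) + n; omega
  have key := split_family_key hn (fun i => v (e1 i)) (fun i => v (e2 i))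
    (fun i => (hv (e2 i)).1)
    (fun i => hdom (e1 i) (e2 i) i.isLt (by show n ≤ (i : ℕ) + n; omega))
  rw [hm1, hm2, Finset.sum_map, Finset.sum_map, Finset.prod_map, Finset.prod_map]
  exact ⟨key.1, key.2.1, key.2.2⟩
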